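/- (Lemma 1, within-environment alignment) Let X_i^b and X_j^b be independent random vectors, both with spurious-feature parameter p^b and the same class label y. Then the expected cosine similarity of their embeddings satisfies E[ ⟨W·X_i^b, W·X_j^b⟩ / (‖W·X_i^b‖·‖W·X_j^b‖) ] = (1 + D·(2p^b - 1)²)/(D+1). -/

import Mathlib

open Finset

private lemma stmt19_L1 {D : ℕ} (f : Fin D → Bool → ℝ) :
    ∑ ε : Fin D → Bool, ∏ i, f i (ε i) = ∏ i, (f i true + f i false) := by
  rw [← Fintype.prod_sum fun i b => f i b]
  congr 1; ext i; rw [Fintype.sum_bool]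

private lemma stmt19_L2 {D : ℕ} (F : Fin D → Bool → Bool → ℝ) :
    ∑ ε : Fin D → Bool, ∑ δ : Fin D → Bool, ∏ i, F i (ε i) (δ i)
      = ∏ i, (F i true true + F i true false + F i false true + F i false false) := by
  have h1 : ∀ ε : Fin D → Bool, ∑ δ : Fin D → Bool, ∏ i, F i (ε i) (δ i)
      = ∏ i, (F i (ε i) true + F i (ε i) false) :=
    fun ε => stmt19_L1 fun i b => F i (ε i) b
  simp only [h1]
  rw [stmt19_L1 fun i a => F i a true + F i a false]
  congr 1; ext i; ring

private lemma stmt19_Ldot {D Q : ℕ} (W : Matrix (Fin Q) (Fin (D + 1)) ℝ)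
    (hW : W.transpose * W = 1) (u v : Fin (D+1) → ℝ) :
    dotProduct (W.mulVec u) (W.mulVec v) = dotProduct u v := by
  rw [Matrix.dotProduct_mulVec, Matrix.vecMul_mulVec, hW, Matrix.vecMul_one]

/-- **Lemma 1, within-environment alignment.** `Xi` and `Xj` are
independent random `{-1,1}`-vectors, both with spurious-feature parameter `p^b` and
the same label `y`. Then the expected cosine similarity of the embeddings `W·Xi` and
`W·Xj` equals `(1 + D·(2p^b - 1)²)/(D+1)`. -/
theorem stmt_19
    {Ω : Type*} [MeasurableSpace Ω] (μ : MeasureTheory.Measure Ω)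
    [MeasureTheory.IsProbabilityMeasure μ]
    (D Q : ℕ) (hD : 0 < D) (hQ : D + 1 ≤ Q)
    (pb : ℝ) (hpb : 1 / 2 ≤ pb) (hpb1 : pb ≤ 1)
    (y : ℝ) (hy : y = 1 ∨ y = -1)
    -- `W` is semi-orthogonal: `Wᵀ W = I`
    (W : Matrix (Fin Q) (Fin (D + 1)) ℝ) (hW : W.transpose * W = 1)
    (Xi Xj : Ω → (Fin (D + 1) → ℝ))
    (hXi : Measurable Xi) (hXj : Measurable Xj)
    -- joint law: `Xi` and `Xj` independent, each with spurious coordinates i.i.d.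
    -- equal to `y` with probability `pb`.
    (hlaw : ∀ (ε δ : Fin D → Bool),
      μ {ω | Xi ω = Fin.cons y (fun i => if ε i then y else -y) ∧
             Xj ω = Fin.cons y (fun i => if δ i then y else -y)} =
        ENNReal.ofReal ((∏ i, (if ε i then pb else 1 - pb)) *
          (∏ i, (if δ i then pb else 1 - pb)))) :
    ∫ ω, (dotProduct (W.mulVec (Xi ω)) (W.mulVec (Xj ω))) /
        (Real.sqrt (∑ q, (W.mulVec (Xi ω)) q ^ 2) *
         Real.sqrt (∑ q, (W.mulVec (Xj ω)) q ^ 2)) ∂μ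
      = (1 + (D : ℝ) * (2 * pb - 1) ^ 2) / ((D : ℝ) + 1) := by
  classical
  have hy2 : y * y = 1 := by rcases hy with h | h <;> simp [h]
  have hyne : y ≠ -y := by rcases hy with h | h <;> norm_num [h]
  set v : (Fin D → Bool) → Fin (D+1) → ℝ :=
    fun ε => Fin.cons y (fun i => if ε i then y else -y) with hv
  have hvinj : Function.Injective v := by
    intro ε ε' h
    funext i
    have h2 := congrFun h i.succ
    simp only [hv, Fin.cons_succ] at h2
    by_cases h3 : ε i <;> by_cases h4 : ε' i <;>
      simp [h3, h4] at h2 ⊢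
    · exact hyne h2
    · exact hyne h2.symm
  set p : (Fin D → Bool) → ℝ := fun ε => ∏ i, (if ε i then pb else 1 - pb) with hp
  have hpnn : ∀ ε, 0 ≤ p ε := by
    intro ε
    apply Finset.prod_nonneg
    intro i _
    split <;> linarith
  have hdotv : ∀ ε δ, dotProduct (v ε) (v δ)
      = 1 + ∑ i, (if ε i = δ i then (1:ℝ) else -1) := by
    intro ε δ
    simp only [dotProduct, hv, Fin.sum_univ_succ, Fin.cons_zero, Fin.cons_succ]
    rw [hy2]
    congr 1
    apply Finset.sum_congr rfl
    intro i _
    by_cases h3 : ε i <;> by_cases h4 : δ i <;>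
      simp [h3, h4, mul_neg, neg_mul, neg_neg, hy2]
  have hWdot : ∀ u w : Fin (D+1) → ℝ,
      dotProduct (W.mulVec u) (W.mulVec w) = dotProduct u w :=
    stmt19_Ldot W hW
  have hWnorm : ∀ ε, ∑ q, (W.mulVec (v ε)) q ^ 2 = (D:ℝ) + 1 := by
    intro ε
    have h1 : ∑ q, (W.mulVec (v ε)) q ^ 2
        = dotProduct (W.mulVec (v ε)) (W.mulVec (v ε)) := by
      simp [dotProduct, sq]
    rw [h1, hWdot, hdotv]
    have h2 : ∀ i : Fin D, (if ε i = ε i then (1:ℝ) else -1) = 1 := by simp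
    rw [Finset.sum_congr rfl fun i _ => h2 i]
    simp [Finset.card_univ]
    ring
  set A : (Fin D → Bool) × (Fin D → Bool) → Set Ω :=
    fun σ => {ω | Xi ω = v σ.1 ∧ Xj ω = v σ.2} with hA
  have hAmeas : ∀ σ, MeasurableSet (A σ) := by
    intro σ
    have h1 : A σ = Xi ⁻¹' {v σ.1} ∩ Xj ⁻¹' {v σ.2} := rfl
    rw [h1]
    exact (hXi (measurableSet_singleton _)).inter (hXj (measurableSet_singleton _))
  have hμA : ∀ σ, μ (A σ) = ENNReal.ofReal (p σ.1 * p σ.2) := fun σ => hlaw σ.1 σ.2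
  have hAdisj : ∀ σ τ, σ ≠ τ → ∀ ω, ω ∈ A σ → ω ∉ A τ := by
    intro σ τ hστ ω hσ hτ
    exact hστ (Prod.ext (hvinj (hσ.1.symm.trans hτ.1)) (hvinj (hσ.2.symm.trans hτ.2)))
  have hkey1 : ∑ ε : Fin D → Bool, ∑ δ : Fin D → Bool, p ε * p δ = 1 := by
    have h1 : ∀ ε δ : Fin D → Bool, p ε * p δ
        = ∏ i, ((if ε i then pb else 1 - pb) * (if δ i then pb else 1 - pb)) := by
      intro ε δ
      rw [Finset.prod_mul_distrib]
    simp only [h1]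
    rw [stmt19_L2 fun i a b => (if a then pb else 1 - pb) * (if b then pb else 1 - pb)]
    refine Finset.prod_eq_one fun i _ => ?_
    norm_num
    ring
  have hμU : μ (⋃ σ, A σ) = 1 := by
    rw [MeasureTheory.measure_iUnion ?_ hAmeas]
    · rw [tsum_fintype]
      simp only [hμA]
      rw [← ENNReal.ofReal_sum_of_nonneg (fun σ _ => mul_nonneg (hpnn _) (hpnn _))]
      rw [show (∑ σ : (Fin D → Bool) × (Fin D → Bool), p σ.1 * p σ.2) = 1 by
        rw [Fintype.sum_prod_type]; exact hkey1]
      simp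
    · intro σ τ hστ
      rw [Function.onFun, Set.disjoint_left]
      intro ω hωσ hωτ
      exact hAdisj σ τ hστ ω hωσ hωτ
  have hUc : μ (⋃ σ, A σ)ᶜ = 0 := by
    have h1 := MeasureTheory.measure_compl (MeasurableSet.iUnion hAmeas) (MeasureTheory.measure_ne_top μ _)
    rw [hμU, MeasureTheory.measure_univ] at h1
    simpa using h1
  set c : (Fin D → Bool) × (Fin D → Bool) → ℝ :=
    fun σ => (1 + ∑ i, (if σ.1 i = σ.2 i then (1:ℝ) else -1)) / ((D:ℝ) + 1) with hc
  have hD1 : (0:ℝ) < (D:ℝ) + 1 := by positivity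
  have haeeq : (fun ω => (dotProduct (W.mulVec (Xi ω)) (W.mulVec (Xj ω))) /
        (Real.sqrt (∑ q, (W.mulVec (Xi ω)) q ^ 2) *
         Real.sqrt (∑ q, (W.mulVec (Xj ω)) q ^ 2)))
      =ᵐ[μ] (fun ω => ∑ σ, (A σ).indicator (fun _ => c σ) ω) := by
    have hae : ∀ᵐ ω ∂μ, ω ∈ ⋃ σ, A σ := by
      rw [MeasureTheory.ae_iff]
      exact hUc
    filter_upwards [hae] with ω hω
    rw [Set.mem_iUnion] at hω
    obtain ⟨σ₀, hσ₀⟩ := hω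
    have hXiω : Xi ω = v σ₀.1 := hσ₀.1
    have hXjω : Xj ω = v σ₀.2 := hσ₀.2
    rw [hXiω, hXjω, hWdot, hWnorm, hWnorm, hdotv,
      Real.mul_self_sqrt (le_of_lt hD1)]
    rw [Finset.sum_eq_single σ₀]
    · rw [Set.indicator_of_mem hσ₀]
    · intro τ _ hτ
      exact Set.indicator_of_notMem (hAdisj σ₀ τ (Ne.symm hτ) ω hσ₀) _
    · intro h
      exact absurd (Finset.mem_univ σ₀) h
  rw [MeasureTheory.integral_congr_ae haeeq,
    MeasureTheory.integral_finset_sum _ (fun σ _ =>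
      (MeasureTheory.integrable_indicator_iff (hAmeas σ)).2
        (MeasureTheory.integrableOn_const (MeasureTheory.measure_ne_top μ _)))]
  have hint : ∀ σ, ∫ ω, (A σ).indicator (fun _ => c σ) ω ∂μ = (p σ.1 * p σ.2) * c σ := by
    intro σ
    rw [MeasureTheory.integral_indicator_const _ (hAmeas σ), MeasureTheory.measureReal_def, hμA σ,
      ENNReal.toReal_ofReal (mul_nonneg (hpnn _) (hpnn _)), smul_eq_mul]
  simp only [hint]
  -- final algebra
  have hkey2 : ∀ i : Fin D, ∑ ε : Fin D → Bool, ∑ δ : Fin D → Bool,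
      p ε * p δ * (if ε i = δ i then (1:ℝ) else -1) = (2 * pb - 1) ^ 2 := by
    intro i
    have hrw : ∀ ε δ : Fin D → Bool, p ε * p δ * (if ε i = δ i then (1:ℝ) else -1)
        = ∏ j, ((if ε j then pb else 1 - pb) * (if δ j then pb else 1 - pb) *
            (if j = i then (if ε j = δ j then (1:ℝ) else -1) else 1)) := by
      intro ε δ
      rw [Finset.prod_mul_distrib, Finset.prod_mul_distrib, Finset.prod_ite_eq']
      simp [hp]
    simp only [hrw]
    rw [stmt19_L2 fun j a b => (if a then pb else 1 - pb) * (if b then pb else 1 - pb) *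
      (if j = i then (if a = b then (1:ℝ) else -1) else 1)]
    have h3 : ∀ j : Fin D,
        ((if (true:Bool) then pb else 1 - pb) * (if (true:Bool) then pb else 1 - pb) *
            (if j = i then (if (true:Bool) = (true:Bool) then (1:ℝ) else -1) else 1)
          + (if (true:Bool) then pb else 1 - pb) * (if (false:Bool) then pb else 1 - pb) *
            (if j = i then (if (true:Bool) = (false:Bool) then (1:ℝ) else -1) else 1)
          + (if (false:Bool) then pb else 1 - pb) * (if (true:Bool) then pb else 1 - pb) *
            (if j = i then (if (false:Bool) = (true:Bool) then (1:ℝ) else -1) else 1)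
          + (if (false:Bool) then pb else 1 - pb) * (if (false:Bool) then pb else 1 - pb) *
            (if j = i then (if (false:Bool) = (false:Bool) then (1:ℝ) else -1) else 1))
        = if j = i then (2 * pb - 1) ^ 2 else 1 := by
      intro j
      by_cases h : j = i <;> simp [h] <;> ring
    rw [Finset.prod_congr rfl fun j _ => h3 j, Finset.prod_ite_eq']
    simp
  rw [Fintype.sum_prod_type]
  have hstep : ∀ ε δ : Fin D → Bool, (p ε * p δ) * c (ε, δ)
      = (p ε * p δ + ∑ i, p ε * p δ * (if ε i = δ i then (1:ℝ) else -1)) / ((D:ℝ) + 1) := by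
    intro ε δ
    simp only [hc]
    rw [← Finset.mul_sum]
    ring
  simp only [hstep]
  have e1 : ∀ ε : Fin D → Bool, (∑ δ : Fin D → Bool,
      (p ε * p δ + ∑ i, p ε * p δ * (if ε i = δ i then (1:ℝ) else -1)) / ((D:ℝ) + 1))
      = (∑ δ : Fin D → Bool,
        (p ε * p δ + ∑ i, p ε * p δ * (if ε i = δ i then (1:ℝ) else -1))) / ((D:ℝ) + 1) :=
    fun ε => (Finset.sum_div _ _ _).symm
  simp only [e1]
  rw [← Finset.sum_div]
  congr 1
  rw [show (∑ ε : Fin D → Bool, ∑ δ : Fin D → Bool,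
      (p ε * p δ + ∑ i, p ε * p δ * (if ε i = δ i then (1:ℝ) else -1)))
    = (∑ ε : Fin D → Bool, ∑ δ : Fin D → Bool, p ε * p δ)
      + ∑ ε : Fin D → Bool, ∑ δ : Fin D → Bool, ∑ i,
        p ε * p δ * (if ε i = δ i then (1:ℝ) else -1) by
    rw [← Finset.sum_add_distrib]
    exact Finset.sum_congr rfl fun ε _ => Finset.sum_add_distrib]
  rw [hkey1]
  congr 1
  have hswap : (∑ ε : Fin D → Bool, ∑ δ : Fin D → Bool, ∑ i,
        p ε * p δ * (if ε i = δ i then (1:ℝ) else -1))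
      = ∑ i, ∑ ε : Fin D → Bool, ∑ δ : Fin D → Bool,
        p ε * p δ * (if ε i = δ i then (1:ℝ) else -1) := by
    have hswap1 : ∀ ε : Fin D → Bool, (∑ δ : Fin D → Bool, ∑ i,
        p ε * p δ * (if ε i = δ i then (1:ℝ) else -1))
        = ∑ i, ∑ δ : Fin D → Bool, p ε * p δ * (if ε i = δ i then (1:ℝ) else -1) :=
      fun ε => Finset.sum_comm
    simp only [hswap1]
    exact Finset.sum_comm
  rw [hswap, Finset.sum_congr rfl fun i _ => hkey2 i]
  simp [Finset.card_univ, mul_comm]
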